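/- arXiv:2309.03495 — 5 statements merged into one kernel-verified Lean document; each statement's English description precedes it below -/
import Mathlib

section
/- Let H : [1,∞) → ℝ and define E : ℝ^{2×2}_+ → ℝ by E(A) = H(K_A). If E is rank-one convex, then H is convex and non-decreasing on [1,∞), and E is polyconvex. -/
open MeasureTheory Matrix

noncomputable section

/-- Operator norm of a 2×2 real matrix as a linear map of Euclidean ℝ². -/
def opNorm (A : Matrix (Fin 2) (Fin 2) ℝ) : ℝ :=
  ‖Matrix.toEuclideanCLM (𝕜 := ℝ) A‖

/-- The Burkholder functional. -/
def Bp (p : ℝ) (A : Matrix (Fin 2) (Fin 2) ℝ) : ℝ :=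
  ((p / 2 - 1) * opNorm A ^ 2 - p / 2 * A.det) * opNorm A ^ (p - 2)

/-- The functional 𝒲. -/
def Wfun (A : Matrix (Fin 2) (Fin 2) ℝ) : ℝ :=
  opNorm A ^ 2 / A.det - Real.log (opNorm A ^ 2 / A.det) + Real.log A.det

/-- The functional ℱ. -/
def Ffun (A : Matrix (Fin 2) (Fin 2) ℝ) : ℝ :=
  opNorm A ^ 2 - (1 + Real.log (opNorm A ^ 2)) * A.det

/-- A 2×2 real matrix acting on ℂ ≅ ℝ². -/
def mApply (A : Matrix (Fin 2) (Fin 2) ℝ) (z : ℂ) : ℂ :=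
  ⟨A 0 0 * z.re + A 0 1 * z.im, A 1 0 * z.re + A 1 1 * z.im⟩

/-- The 2×2 real matrix of an ℝ-linear map ℂ → ℂ in the basis (1, i). -/
def clmToMatrix (T : ℂ →L[ℝ] ℂ) : Matrix (Fin 2) (Fin 2) ℝ :=
  !![(T 1).re, (T Complex.I).re; (T 1).im, (T Complex.I).im]

/-- The total derivative of f : ℂ → ℂ at z, viewed as a 2×2 real matrix. -/
def Dm (f : ℂ → ℂ) (z : ℂ) : Matrix (Fin 2) (Fin 2) ℝ :=
  clmToMatrix (fderiv ℝ f z)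

/-- The matrix of the ℝ-linear map z ↦ z + b·conj z. -/
def Af (b : ℂ) : Matrix (Fin 2) (Fin 2) ℝ :=
  !![1 + b.re, b.im; b.im, 1 - b.re]

/-- Rank-one convexity of a functional on ℝ^{2×2}_+. -/
def RankOneConvexOnPos (E : Matrix (Fin 2) (Fin 2) ℝ → ℝ) : Prop :=
  ∀ A : Matrix (Fin 2) (Fin 2) ℝ, 0 < A.det →
    ∀ X : Matrix (Fin 2) (Fin 2) ℝ, X.rank = 1 →
      ConvexOn ℝ {t : ℝ | 0 < (A + t • X).det} (fun t => E (A + t • X))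

/-- Quasiconvexity of a functional on ℝ^{2×2}_+ tested on C¹ diffeomorphic deformations
with affine boundary values. -/
def QuasiconvexOnPos (E : Matrix (Fin 2) (Fin 2) ℝ → ℝ) : Prop :=
  ∀ A : Matrix (Fin 2) (Fin 2) ℝ, 0 < A.det →
    ∀ Ω : Set ℂ, IsOpen Ω → IsConnected Ω → Bornology.IsBounded Ω →
      ∀ (f : ℂ → ℂ) (U : Set ℂ), IsOpen U → closure Ω ⊆ U → ContDiffOn ℝ 1 f U →
        Set.InjOn f (closure Ω) → (∀ x ∈ closure Ω, 0 < (Dm f x).det) →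
        (∀ x ∈ frontier Ω, f x = mApply A x) →
        E A ≤ (1 / (volume Ω).toReal) * ∫ x in Ω, E (Dm f x)

/-- Rank-one convexity for extended-real-valued functionals on m×n matrices:
convexity along rank-one lines in the epigraph sense. -/
def RankOneConvexE {m n : ℕ} (E : Matrix (Fin m) (Fin n) ℝ → EReal) : Prop :=
  ∀ (A X : Matrix (Fin m) (Fin n) ℝ), X.rank = 1 →
    Convex ℝ {q : ℝ × ℝ | E (A + q.1 • X) ≤ (q.2 : EReal)}

/-- Polyconvexity of a functional on ℝ^{2×2}_+: it is the restriction of a convex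
function (with values in ℝ ∪ {+∞}) of the pair (A, det A). -/
def Polyconvex (F : Matrix (Fin 2) (Fin 2) ℝ → ℝ) : Prop :=
  ∃ Φ : Matrix (Fin 2) (Fin 2) ℝ × ℝ → EReal,
    (∀ q, Φ q ≠ ⊥) ∧
    Convex ℝ {q : (Matrix (Fin 2) (Fin 2) ℝ × ℝ) × ℝ | Φ q.1 ≤ (q.2 : EReal)} ∧
    ∀ A : Matrix (Fin 2) (Fin 2) ℝ, 0 < A.det → Φ (A, A.det) = (F A : EReal)

end

open MeasureTheory Matrix

open scoped Matrix.Norms.L2Operator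

section AuxLemmas

lemma opNorm_eq_norm (A : Matrix (Fin 2) (Fin 2) ℝ) : opNorm A = ‖A‖ := rfl

lemma opNorm_le_of (M : Matrix (Fin 2) (Fin 2) ℝ) (c : ℝ) (hc : 0 ≤ c)
    (h : ∀ x y : ℝ, (M 0 0 * x + M 0 1 * y)^2 + (M 1 0 * x + M 1 1 * y)^2 ≤ c^2 * (x^2 + y^2)) :
    opNorm M ≤ c := by
  refine ContinuousLinearMap.opNorm_le_bound _ hc ?_
  intro x
  have hx : ‖x‖ = Real.sqrt ((x 0)^2 + (x 1)^2) := by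
    rw [EuclideanSpace.norm_eq]
    simp [Fin.sum_univ_two, sq_abs]
  have hTx : ‖(Matrix.toEuclideanCLM (𝕜 := ℝ) M) x‖
      = Real.sqrt ((M 0 0 * x 0 + M 0 1 * x 1)^2 + (M 1 0 * x 0 + M 1 1 * x 1)^2) := by
    rw [EuclideanSpace.norm_eq]
    have h0 : ∀ i, (Matrix.toEuclideanCLM (𝕜 := ℝ) M) x i = (M *ᵥ (WithLp.equiv 2 _ x)) i := by
      intro i; rfl
    simp only [h0]
    simp [Matrix.mulVec, dotProduct, Fin.sum_univ_two, sq_abs]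
  rw [hx, hTx, ← Real.sqrt_sq hc, ← Real.sqrt_mul (by positivity)]
  exact Real.sqrt_le_sqrt (h (x 0) (x 1))

lemma le_opNorm_of (M : Matrix (Fin 2) (Fin 2) ℝ) (x y : ℝ) (h : x^2 + y^2 = 1) :
    Real.sqrt ((M 0 0 * x + M 0 1 * y)^2 + (M 1 0 * x + M 1 1 * y)^2) ≤ opNorm M := by
  set v : EuclideanSpace ℝ (Fin 2) := (WithLp.equiv 2 (Fin 2 → ℝ)).symm ![x, y] with hv
  have hnv : ‖v‖ = 1 := by
    rw [EuclideanSpace.norm_eq]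
    simp [hv, Fin.sum_univ_two, sq_abs]
    rw [h]
  have := (Matrix.toEuclideanCLM (𝕜 := ℝ) M).le_opNorm v
  rw [hnv, mul_one] at this
  refine le_trans (le_of_eq ?_) this
  rw [EuclideanSpace.norm_eq]
  have h0 : ∀ i, (Matrix.toEuclideanCLM (𝕜 := ℝ) M) v i = (M *ᵥ (WithLp.equiv 2 _ v)) i := by
    intro i; rfl
  simp only [h0]
  simp [hv, Matrix.mulVec, dotProduct, Fin.sum_univ_two, sq_abs]


lemma opNorm_diag {a : ℝ} (ha : 1 ≤ a) : opNorm !![a, 0; 0, 1] = a := by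
  have ha0 : (0:ℝ) ≤ a := by linarith
  refine le_antisymm (opNorm_le_of _ a ha0 ?_) ?_
  · intro x y
    have e00 : (!![a, 0; 0, 1] : Matrix (Fin 2) (Fin 2) ℝ) 0 0 = a := rfl
    have e01 : (!![a, 0; 0, 1] : Matrix (Fin 2) (Fin 2) ℝ) 0 1 = 0 := rfl
    have e10 : (!![a, 0; 0, 1] : Matrix (Fin 2) (Fin 2) ℝ) 1 0 = 0 := rfl
    have e11 : (!![a, 0; 0, 1] : Matrix (Fin 2) (Fin 2) ℝ) 1 1 = 1 := rfl
    rw [e00, e01, e10, e11]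
    have ha2 : 1 ≤ a^2 := by nlinarith
    nlinarith [mul_nonneg (sq_nonneg y) (sub_nonneg.mpr ha2)]
  · have := le_opNorm_of !![a, 0; 0, 1] 1 0 (by norm_num)
    simpa [Real.sqrt_sq ha0] using this

lemma one_le_opNorm_shear (a t : ℝ) : Real.sqrt (t^2 + 1) ≤ opNorm !![a, t; 0, 1] := by
  have := le_opNorm_of !![a, t; 0, 1] 0 1 (by norm_num)
  simpa using this

lemma opNorm_shear_even (a t : ℝ) : opNorm !![a, -t; 0, 1] = opNorm !![a, t; 0, 1] := by
  have hD : opNorm !![(1:ℝ), 0; 0, -1] = 1 := by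
    refine le_antisymm (opNorm_le_of _ 1 zero_le_one ?_) ?_
    · intro x y
      have e00 : (!![(1:ℝ), 0; 0, -1] : Matrix (Fin 2) (Fin 2) ℝ) 0 0 = 1 := rfl
      have e01 : (!![(1:ℝ), 0; 0, -1] : Matrix (Fin 2) (Fin 2) ℝ) 0 1 = 0 := rfl
      have e10 : (!![(1:ℝ), 0; 0, -1] : Matrix (Fin 2) (Fin 2) ℝ) 1 0 = 0 := rfl
      have e11 : (!![(1:ℝ), 0; 0, -1] : Matrix (Fin 2) (Fin 2) ℝ) 1 1 = -1 := rfl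
      rw [e00, e01, e10, e11]
      nlinarith
    · have := le_opNorm_of !![(1:ℝ), 0; 0, -1] 1 0 (by norm_num)
      simpa using this
  have key : ∀ s : ℝ, opNorm !![a, -s; 0, 1] ≤ opNorm !![a, s; 0, 1] := by
    intro s
    have hmul : !![a, -s; 0, 1] = !![(1:ℝ), 0; 0, -1] * !![a, s; 0, 1] * !![(1:ℝ), 0; 0, -1] := by
      simp [Matrix.mul_fin_two]
    rw [hmul, opNorm_eq_norm]
    calc ‖!![(1:ℝ), 0; 0, -1] * !![a, s; 0, 1] * !![(1:ℝ), 0; 0, -1]‖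
        ≤ ‖!![(1:ℝ), 0; 0, -1] * !![a, s; 0, 1]‖ * ‖!![(1:ℝ), 0; 0, -1]‖ := norm_mul_le _ _
      _ ≤ ‖!![(1:ℝ), 0; 0, -1]‖ * ‖!![a, s; 0, 1]‖ * ‖!![(1:ℝ), 0; 0, -1]‖ := by
          gcongr; exact norm_mul_le _ _
      _ = ‖!![a, s; 0, 1]‖ := by
          rw [← opNorm_eq_norm, ← opNorm_eq_norm, hD]; ring
  refine le_antisymm (key t) ?_
  have := key (-t)
  simpa using this

lemma det_le_opNorm_sq (A : Matrix (Fin 2) (Fin 2) ℝ) : A.det ≤ opNorm A ^ 2 := by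
  set u := Real.sqrt ((A 0 0)^2 + (A 1 0)^2) with hu
  set v := Real.sqrt ((A 0 1)^2 + (A 1 1)^2) with hv
  have hu0 : 0 ≤ u := Real.sqrt_nonneg _
  have hv0 : 0 ≤ v := Real.sqrt_nonneg _
  have hu2 : u^2 = (A 0 0)^2 + (A 1 0)^2 := Real.sq_sqrt (by positivity)
  have hv2 : v^2 = (A 0 1)^2 + (A 1 1)^2 := Real.sq_sqrt (by positivity)
  have h1 : u ≤ opNorm A := by
    have := le_opNorm_of A 1 0 (by norm_num); simpa [hu] using this
  have h2 : v ≤ opNorm A := by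
    have := le_opNorm_of A 0 1 (by norm_num); simpa [hv] using this
  have hd : A.det = A 0 0 * A 1 1 - A 0 1 * A 1 0 := Matrix.det_fin_two A
  have hdet2 : A.det^2 ≤ (u * v)^2 := by
    rw [hd, mul_pow, hu2, hv2]
    nlinarith [sq_nonneg (A 0 0 * A 0 1 + A 1 0 * A 1 1)]
  have hdet : A.det ≤ u * v := by
    calc A.det ≤ |A.det| := le_abs_self _
      _ = Real.sqrt (A.det^2) := (Real.sqrt_sq_eq_abs _).symm
      _ ≤ Real.sqrt ((u*v)^2) := Real.sqrt_le_sqrt hdet2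
      _ = u * v := Real.sqrt_sq (mul_nonneg hu0 hv0)
  have hn0 : 0 ≤ opNorm A := le_trans hu0 h1
  calc A.det ≤ u * v := hdet
    _ ≤ opNorm A * opNorm A := mul_le_mul h1 h2 hv0 hn0
    _ = opNorm A ^ 2 := (sq (opNorm A)).symm

lemma rank_X1 : (!![(1:ℝ), 0; 0, 0] : Matrix (Fin 2) (Fin 2) ℝ).rank = 1 := by
  have h : (!![(1:ℝ), 0; 0, 0] : Matrix (Fin 2) (Fin 2) ℝ) = Matrix.diagonal ![1, 0] := by
    ext i j; fin_cases i <;> fin_cases j <;> simp [Matrix.diagonal]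
  rw [h, Matrix.rank_diagonal]
  rw [Fintype.card_eq_one_iff]
  refine ⟨⟨0, by norm_num⟩, ?_⟩
  rintro ⟨i, hi⟩
  fin_cases i
  · rfl
  · simp at hi

lemma rank_X2 : (!![(0:ℝ), 1; 0, 0] : Matrix (Fin 2) (Fin 2) ℝ).rank = 1 := by
  have h : (!![(0:ℝ), 1; 0, 0] : Matrix (Fin 2) (Fin 2) ℝ)
      = (Matrix.diagonal ![(1:ℝ), 0]).submatrix (Equiv.refl (Fin 2)) (Equiv.swap 0 1) := by
    ext i j; fin_cases i <;> fin_cases j <;> simp [Matrix.diagonal, Equiv.swap_apply_def]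
  rw [h, Matrix.rank_submatrix]
  rw [Matrix.rank_diagonal]
  rw [Fintype.card_eq_one_iff]
  refine ⟨⟨0, by norm_num⟩, ?_⟩
  rintro ⟨i, hi⟩
  fin_cases i
  · rfl
  · simp at hi


lemma convexOn_congr' {s : Set ℝ} {f g : ℝ → ℝ} (hf : ConvexOn ℝ s f)
    (h : ∀ x ∈ s, f x = g x) : ConvexOn ℝ s g := by
  refine ⟨hf.1, fun x hx y hy a b ha hb hab => ?_⟩
  have hm : a • x + b • y ∈ s := hf.1 hx hy ha hb hab
  rw [← h _ hm, ← h _ hx, ← h _ hy]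
  exact hf.2 hx hy ha hb hab

lemma persp {a b n1 n2 d1 d2 : ℝ} (ha : 0 ≤ a) (hb : 0 ≤ b)
    (hd1 : 0 < d1) (hd2 : 0 < d2) (hD : 0 < a*d1 + b*d2) :
    (a*n1 + b*n2)^2 / (a*d1 + b*d2) ≤ a*(n1^2/d1) + b*(n2^2/d2) := by
  rw [div_le_iff₀ hD]
  have hX : n1^2/d1 * d1 = n1^2 := div_mul_cancel₀ _ hd1.ne'
  have hY : n2^2/d2 * d2 = n2^2 := div_mul_cancel₀ _ hd2.ne'
  have hkey : 2*(n1*n2) ≤ n1^2/d1 * d2 + n2^2/d2 * d1 := by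
    have hsum : n1^2/d1 * d2 + n2^2/d2 * d1 = (n1^2*d2^2 + n2^2*d1^2)/(d1*d2) := by
      field_simp
    rw [hsum, le_div_iff₀ (by positivity)]
    nlinarith [sq_nonneg (n1*d2 - n2*d1)]
  have h3 : a*b*(2*(n1*n2)) ≤ a*b*(n1^2/d1 * d2 + n2^2/d2 * d1) :=
    mul_le_mul_of_nonneg_left hkey (mul_nonneg ha hb)
  have h4 : a^2*(n1^2/d1*d1) = a^2*n1^2 := by rw [hX]
  have h5 : b^2*(n2^2/d2*d2) = b^2*n2^2 := by rw [hY]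
  nlinarith [h3, h4, h5]

end AuxLemmas

theorem stmt4 (H : ℝ → ℝ)
    (hrc : RankOneConvexOnPos (fun A => H (opNorm A ^ 2 / A.det))) :
    ConvexOn ℝ (Set.Ici 1) H ∧ MonotoneOn H (Set.Ici 1) ∧
      Polyconvex (fun A => H (opNorm A ^ 2 / A.det)) := by
  -- Part 1 : convexity of H on [1, ∞)
  have hcv : ConvexOn ℝ (Set.Ici (1:ℝ)) H := by
    have hline : ∀ t : ℝ,
        (!![1, 0; 0, 1] : Matrix (Fin 2) (Fin 2) ℝ) + t • !![1, 0; 0, 0]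
          = !![1 + t, 0; 0, 1] := by
      intro t
      ext i j
      fin_cases i <;> fin_cases j <;>
        simp [Matrix.add_apply, Matrix.smul_apply, smul_eq_mul]
    have hAdet : (0:ℝ) < (!![1, 0; 0, 1] : Matrix (Fin 2) (Fin 2) ℝ).det := by
      simp [Matrix.det_fin_two_of]
    have hc := hrc !![1, 0; 0, 1] hAdet !![1, 0; 0, 0] rank_X1
    have hdet : ∀ t : ℝ,
        ((!![1, 0; 0, 1] : Matrix (Fin 2) (Fin 2) ℝ) + t • !![1, 0; 0, 0]).det = 1 + t := by
      intro t; rw [hline t]; simp [Matrix.det_fin_two_of]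
    have hsub : Set.Ici (0:ℝ) ⊆
        {t : ℝ | 0 < ((!![1, 0; 0, 1] : Matrix (Fin 2) (Fin 2) ℝ) + t • !![1, 0; 0, 0]).det} := by
      intro t ht
      have ht' : (0:ℝ) ≤ t := ht
      simp only [Set.mem_setOf_eq, hdet t]
      linarith
    have hc2 := hc.subset hsub (convex_Ici 0)
    have hc3 : ConvexOn ℝ (Set.Ici (0:ℝ)) (fun t => H (1 + t)) := by
      refine convexOn_congr' hc2 ?_
      intro t ht
      have ht' : (0:ℝ) ≤ t := ht
      have h1t : (1:ℝ) ≤ 1 + t := by linarith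
      have h1t' : (1:ℝ) + t ≠ 0 := by linarith
      simp only [hline t, hdet t]
      rw [show ((!![1 + t, 0; 0, 1] : Matrix (Fin 2) (Fin 2) ℝ)).det = 1 + t by
        simp [Matrix.det_fin_two_of]]
      rw [opNorm_diag h1t, sq, mul_div_assoc, div_self h1t', mul_one]
    refine ⟨convex_Ici 1, fun x hx y hy a b ha hb hab => ?_⟩
    have hx' : (0:ℝ) ≤ x - 1 := by have : (1:ℝ) ≤ x := hx; linarith
    have hy' : (0:ℝ) ≤ y - 1 := by have : (1:ℝ) ≤ y := hy; linarith
    have := hc3.2 (Set.mem_Ici.mpr hx') (Set.mem_Ici.mpr hy') ha hb hab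
    simp only [smul_eq_mul] at this ⊢
    rw [show (1:ℝ) + (a * (x - 1) + b * (y - 1)) = a * x + b * y by
      linear_combination -hab] at this
    rw [show (1:ℝ) + (x - 1) = x by ring, show (1:ℝ) + (y - 1) = y by ring] at this
    exact this
  -- Part 2 : monotonicity of H on [1, ∞)
  have hmono : MonotoneOn H (Set.Ici (1:ℝ)) := by
    intro x hx y hy hxy
    have hx1 : (1:ℝ) ≤ x := hx
    have hx0 : (0:ℝ) < x := by linarith
    have hline : ∀ t : ℝ,
        (!![x, 0; 0, 1] : Matrix (Fin 2) (Fin 2) ℝ) + t • !![0, 1; 0, 0]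
          = !![x, t; 0, 1] := by
      intro t
      ext i j
      fin_cases i <;> fin_cases j <;>
        simp [Matrix.add_apply, Matrix.smul_apply, smul_eq_mul]
    have hAdet : (0:ℝ) < (!![x, 0; 0, 1] : Matrix (Fin 2) (Fin 2) ℝ).det := by
      simp [Matrix.det_fin_two_of]; linarith
    have hdet : ∀ t : ℝ,
        ((!![x, 0; 0, 1] : Matrix (Fin 2) (Fin 2) ℝ) + t • !![0, 1; 0, 0]).det = x := by
      intro t; rw [hline t]; simp [Matrix.det_fin_two_of]
    have hc := hrc !![x, 0; 0, 1] hAdet !![0, 1; 0, 0] rank_X2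
    have huniv : {t : ℝ |
        0 < ((!![x, 0; 0, 1] : Matrix (Fin 2) (Fin 2) ℝ) + t • !![0, 1; 0, 0]).det}
          = Set.univ := by
      ext t; simp [hdet t, hx0]
    rw [huniv] at hc
    set f : ℝ → ℝ := fun t => H (opNorm !![x, t; 0, 1] ^ 2 / x) with hf
    have hcf : ConvexOn ℝ Set.univ f := by
      refine convexOn_congr' hc ?_
      intro t _
      simp only [hline t]
      simp [Matrix.det_fin_two_of]
      rfl
    have feven : ∀ t, f (-t) = f t := by
      intro t; simp only [hf]; rw [opNorm_shear_even]
    have hmin : ∀ t, f 0 ≤ f t := by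
      intro t
      have h2 := hcf.2 (Set.mem_univ t) (Set.mem_univ (-t))
        (by norm_num : (0:ℝ) ≤ 1/2) (by norm_num : (0:ℝ) ≤ 1/2) (by norm_num)
      rw [show (1/2 : ℝ) • t + (1/2 : ℝ) • (-t) = 0 by
        simp only [smul_eq_mul]; ring] at h2
      simp only [smul_eq_mul] at h2
      rw [feven t] at h2
      linarith
    -- IVT
    set g : ℝ → ℝ := fun t => opNorm !![x, t; 0, 1] ^ 2 / x with hg
    have hgcont : Continuous g := by
      have h1 : Continuous fun t : ℝ =>
          (!![x, 0; 0, 1] : Matrix (Fin 2) (Fin 2) ℝ) + t • !![0, 1; 0, 0] :=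
        continuous_const.add (continuous_id.smul continuous_const)
      have h2 : Continuous fun t : ℝ => opNorm !![x, t; 0, 1] := by
        have : (fun t : ℝ => opNorm !![x, t; 0, 1])
            = fun t : ℝ => ‖(!![x, 0; 0, 1] : Matrix (Fin 2) (Fin 2) ℝ) + t • !![0, 1; 0, 0]‖ := by
          funext t; rw [hline t, opNorm_eq_norm]
        rw [this]
        exact h1.norm
      exact (h2.pow 2).div_const x
    set T : ℝ := Real.sqrt (x * y) with hT
    have hT0 : 0 ≤ T := Real.sqrt_nonneg _
    have hxy0 : 0 ≤ x * y := by nlinarith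
    have hgT : y ≤ g T := by
      have h1 : Real.sqrt (T^2 + 1) ≤ opNorm !![x, T; 0, 1] := one_le_opNorm_shear x T
      have hT2 : T^2 = x * y := Real.sq_sqrt hxy0
      have hnn : 0 ≤ opNorm !![x, T; 0, 1] := le_trans (Real.sqrt_nonneg _) h1
      have h2 : T^2 + 1 ≤ opNorm !![x, T; 0, 1] ^ 2 := by
        have := pow_le_pow_left₀ (Real.sqrt_nonneg _) h1 2
        rwa [Real.sq_sqrt (by positivity)] at this
      have h3 : x * y ≤ opNorm !![x, T; 0, 1] ^ 2 := by rw [← hT2]; linarith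
      rw [hg]
      calc y = x * y / x := by field_simp
        _ ≤ opNorm !![x, T; 0, 1] ^ 2 / x := by gcongr
    have hg0 : g 0 = x := by
      rw [hg]
      simp only
      rw [opNorm_diag hx1, sq, mul_div_assoc, div_self hx0.ne', mul_one]
    have hivt : ∃ t₀ ∈ Set.Icc 0 T, g t₀ = y := by
      have : y ∈ Set.Icc (g 0) (g T) := by
        rw [hg0]; exact ⟨hxy, hgT⟩
      exact intermediate_value_Icc hT0 hgcont.continuousOn this
    obtain ⟨t₀, _, ht₀⟩ := hivt
    have : f 0 ≤ f t₀ := hmin t₀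
    have hf0 : f 0 = H x := by rw [show f 0 = H (g 0) from rfl, hg0]
    have hft : f t₀ = H y := by rw [show f t₀ = H (g t₀) from rfl, ht₀]
    rw [← hf0, ← hft]
    exact this
  refine ⟨hcv, hmono, ?_⟩
  -- Part 3 : polyconvexity
  classical
  set G : ℝ → ℝ := fun t => H (max t 1) with hG
  have hGmono : Monotone G := by
    intro s t hst
    exact hmono (Set.mem_Ici.mpr (le_max_right s 1)) (Set.mem_Ici.mpr (le_max_right t 1))
      (max_le_max hst le_rfl)
  have hGconv : ∀ (a b u v : ℝ), 0 ≤ a → 0 ≤ b → a + b = 1 →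
      G (a*u + b*v) ≤ a * G u + b * G v := by
    intro a b u v ha hb hab
    have hu1 : (1:ℝ) ≤ max u 1 := le_max_right u 1
    have hv1 : (1:ℝ) ≤ max v 1 := le_max_right v 1
    have hcomb1 : (1:ℝ) ≤ a * max u 1 + b * max v 1 := by nlinarith
    have h1 : max (a*u + b*v) 1 ≤ a * max u 1 + b * max v 1 := by
      apply max_le _ hcomb1
      have h2 : a * u ≤ a * max u 1 := mul_le_mul_of_nonneg_left (le_max_left u 1) ha
      have h3 : b * v ≤ b * max v 1 := mul_le_mul_of_nonneg_left (le_max_left v 1) hb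
      linarith
    have hmax1 : (1:ℝ) ≤ max (a*u + b*v) 1 := le_max_right _ 1
    calc G (a*u + b*v) = H (max (a*u+b*v) 1) := rfl
      _ ≤ H (a * max u 1 + b * max v 1) :=
          hmono (Set.mem_Ici.mpr hmax1) (Set.mem_Ici.mpr hcomb1) h1
      _ ≤ a * H (max u 1) + b * H (max v 1) := by
          have := hcv.2 (Set.mem_Ici.mpr hu1) (Set.mem_Ici.mpr hv1) ha hb hab
          simpa [smul_eq_mul] using this
      _ = a * G u + b * G v := rfl
  refine ⟨fun q => if 0 < q.2 then ((G (opNorm q.1 ^ 2 / q.2) : ℝ) : EReal) else ⊤, ?_, ?_, ?_⟩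
  · intro q
    by_cases h : 0 < q.2 <;> simp [h]
  · -- convexity of the epigraph-type set
    have hmem : ∀ (A : Matrix (Fin 2) (Fin 2) ℝ) (d r : ℝ),
        ((if 0 < d then ((G (opNorm A ^ 2 / d) : ℝ) : EReal) else ⊤) ≤ (r : EReal))
          ↔ (0 < d ∧ G (opNorm A ^ 2 / d) ≤ r) := by
      intro A d r
      by_cases h : 0 < d
      · simp [h, EReal.coe_le_coe_iff]
      · simp [h]
    intro p hp q hq a b ha hb hab
    simp only [Set.mem_setOf_eq] at hp hq ⊢
    rw [hmem] at hp hq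
    obtain ⟨hd1, hr1⟩ := hp
    obtain ⟨hd2, hr2⟩ := hq
    have hcomp1 : (a • p + b • q).1.1 = a • p.1.1 + b • q.1.1 := rfl
    have hcomp2 : (a • p + b • q).1.2 = a * p.1.2 + b * q.1.2 := rfl
    have hcomp3 : (a • p + b • q).2 = a * p.2 + b * q.2 := rfl
    rw [hcomp1, hcomp2, hcomp3] at *
    have hD : 0 < a * p.1.2 + b * q.1.2 := by
      have hmin : 0 < min p.1.2 q.1.2 := lt_min hd1 hd2
      have h1 : a * min p.1.2 q.1.2 ≤ a * p.1.2 :=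
        mul_le_mul_of_nonneg_left (min_le_left _ _) ha
      have h2 : b * min p.1.2 q.1.2 ≤ b * q.1.2 :=
        mul_le_mul_of_nonneg_left (min_le_right _ _) hb
      nlinarith
    rw [hmem]
    refine ⟨hD, ?_⟩
    set n1 := opNorm p.1.1 with hn1
    set n2 := opNorm q.1.1 with hn2
    have hnle : opNorm (a • p.1.1 + b • q.1.1) ≤ a * n1 + b * n2 := by
      rw [opNorm_eq_norm, hn1, hn2, opNorm_eq_norm, opNorm_eq_norm]
      calc ‖a • p.1.1 + b • q.1.1‖ ≤ ‖a • p.1.1‖ + ‖b • q.1.1‖ := norm_add_le _ _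
        _ = a * ‖p.1.1‖ + b * ‖q.1.1‖ := by
            rw [norm_smul, norm_smul, Real.norm_eq_abs, Real.norm_eq_abs,
              abs_of_nonneg ha, abs_of_nonneg hb]
    have hn0 : 0 ≤ opNorm (a • p.1.1 + b • q.1.1) := by
      rw [opNorm_eq_norm]; exact norm_nonneg _
    have step1 : opNorm (a • p.1.1 + b • q.1.1) ^ 2 / (a * p.1.2 + b * q.1.2)
        ≤ (a * n1 + b * n2) ^ 2 / (a * p.1.2 + b * q.1.2) := by
      gcongr
    have step2 : (a * n1 + b * n2) ^ 2 / (a * p.1.2 + b * q.1.2)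
        ≤ a * (n1 ^ 2 / p.1.2) + b * (n2 ^ 2 / q.1.2) := persp ha hb hd1 hd2 hD
    calc G (opNorm (a • p.1.1 + b • q.1.1) ^ 2 / (a * p.1.2 + b * q.1.2))
        ≤ G (a * (n1 ^ 2 / p.1.2) + b * (n2 ^ 2 / q.1.2)) := hGmono (le_trans step1 step2)
      _ ≤ a * G (n1 ^ 2 / p.1.2) + b * G (n2 ^ 2 / q.1.2) := hGconv _ _ _ _ ha hb hab
      _ ≤ a * p.2 + b * q.2 := by
          have h1 := mul_le_mul_of_nonneg_left hr1 ha
          have h2 := mul_le_mul_of_nonneg_left hr2 hb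
          linarith
  · intro A hdA
    have hK : (1:ℝ) ≤ opNorm A ^ 2 / A.det := (one_le_div hdA).mpr (det_le_opNorm_sq A)
    have hGH : G (opNorm A ^ 2 / A.det) = H (opNorm A ^ 2 / A.det) := by
      simp only [hG]
      rw [max_eq_left hK]
    show (if 0 < A.det then ((G (opNorm A ^ 2 / A.det) : ℝ) : EReal) else ⊤)
        = ((H (opNorm A ^ 2 / A.det) : ℝ) : EReal)
    rw [if_pos hdA, hGH]
end

section
/- (Baker–Ericksen inequality.) Let E : ℝ^{2×2}_+ → ℝ be rank-one convex and isotropic, and define Φ : (0,∞)² → ℝ by Φ(x,y) = E(diag(x,y)). Assume Φ is continuously differentiable on (0,∞)². Then for all λ₁, λ₂ > 0 one has (λ₁·∂₁Φ(λ₁,λ₂) − λ₂·∂₂Φ(λ₁,λ₂))·(λ₁ − λ₂) ≥ 0; equivalently, (λ₁ ∂₁Φ − λ₂ ∂₂Φ)/(λ₁ − λ₂) ≥ 0 whenever λ₁ ≠ λ₂. -/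
open MeasureTheory Matrix

open MeasureTheory Matrix

lemma tr2 (a b c d : ℝ) : (!![a,b;c,d])ᵀ = !![a,c;b,d] := by
  ext i j; fin_cases i <;> fin_cases j <;> simp

lemma diag_eq (x y : ℝ) : Matrix.diagonal ![x,y] = !![x,0;0,y] := by
  ext i j; fin_cases i <;> fin_cases j <;> simp [Matrix.diagonal]

lemma QDR (x y p q r : ℝ) (hx : 0 < x) (hy : 0 < y) (hpq : p^2 + q^2 = 1)
    (hr : 0 < r) (hr2 : r^2 = x^2*p^2 + y^2*q^2) :
    !![x*p/r, y*q/r; -(y*q/r), x*p/r] * !![x,0;0,y] * !![p, -q; q, p]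
      = !![r, p*q*(y^2-x^2)/r; 0, x*y/r] := by
  rw [Matrix.mul_fin_two, Matrix.mul_fin_two]
  ext i j
  fin_cases i <;> fin_cases j <;> simp <;> field_simp <;>
    (first
      | ring1
      | linear_combination x*y*hpq
      | linear_combination hr2
      | linear_combination -hr2
      | linear_combination r*hr2
      | linear_combination -r*hr2
      | linear_combination hpq
      | linear_combination -hpq)

lemma QtQ (a b : ℝ) (hab : a^2 + b^2 = 1) :
    (!![a, b; -b, a])ᵀ * !![a, b; -b, a] = 1 ∧ (!![a, b; -b, a]).det = 1 := by
  constructor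
  · rw [tr2, Matrix.mul_fin_two, Matrix.one_fin_two]
    ext i j
    fin_cases i <;> fin_cases j <;> simp <;> (first | ring1 | linear_combination hab | linear_combination -hab)
  · rw [Matrix.det_fin_two_of]; linear_combination hab

lemma key_iso (E : Matrix (Fin 2) (Fin 2) ℝ → ℝ)
    (hiso : ∀ (Q R A : Matrix (Fin 2) (Fin 2) ℝ), Qᵀ * Q = 1 → Q.det = 1 →
      Rᵀ * R = 1 → R.det = 1 → 0 < A.det → E (Q * A * R) = E A)
    (x y p q r : ℝ) (hx : 0 < x) (hy : 0 < y) (hpq : p^2 + q^2 = 1)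
    (hr : 0 < r) (hr2 : r^2 = x^2*p^2 + y^2*q^2) :
    E !![r, p*q*(y^2-x^2)/r; 0, x*y/r] = E (Matrix.diagonal ![x,y]) := by
  have hdet : 0 < (Matrix.diagonal ![x,y]).det := by
    rw [diag_eq, Matrix.det_fin_two_of]; nlinarith
  have hab : (x*p/r)^2 + (y*q/r)^2 = 1 := by
    field_simp; linear_combination -hr2
  have hQ := QtQ (x*p/r) (y*q/r) hab
  have h := hiso !![x*p/r, y*q/r; -(y*q/r), x*p/r] !![p, -q; q, p]
    (Matrix.diagonal ![x,y]) hQ.1 hQ.2 ?_ ?_ hdet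
  · rw [← h, diag_eq, QDR x y p q r hx hy hpq hr hr2]
  · have := QtQ p (-q) (by linear_combination hpq)
    simpa using this.1
  · have := QtQ p (-q) (by linear_combination hpq)
    simpa using this.2


lemma rankX : (!![0,1;0,0] : Matrix (Fin 2) (Fin 2) ℝ).rank = 1 := by
  have h : (!![0,1;0,0] : Matrix (Fin 2) (Fin 2) ℝ)
      = (Matrix.diagonal ![1,0]).submatrix (Equiv.refl (Fin 2)) (Equiv.swap 0 1) := by
    ext i j
    fin_cases i <;> fin_cases j <;> simp [Matrix.diagonal, Equiv.swap_apply_def]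
  rw [h, Matrix.rank_submatrix, Matrix.rank_diagonal]
  rw [Fintype.card_eq_one_iff]
  refine ⟨⟨0, by simp⟩, ?_⟩
  rintro ⟨b, hb⟩
  fin_cases b
  · rfl
  · simp at hb

lemma conv_f (E : Matrix (Fin 2) (Fin 2) ℝ → ℝ) (hrc : RankOneConvexOnPos E)
    (a b : ℝ) (ha : 0 < a) (hb : 0 < b) :
    ConvexOn ℝ Set.univ (fun t : ℝ => E !![a, t; 0, b]) := by
  have hdet : 0 < (Matrix.diagonal ![a,b]).det := by
    rw [diag_eq, Matrix.det_fin_two_of]; nlinarith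
  have h := hrc (Matrix.diagonal ![a,b]) hdet !![0,1;0,0] rankX
  have hAX : ∀ t : ℝ, Matrix.diagonal ![a,b] + t • !![0,1;0,0] = !![a, t; 0, b] := by
    intro t
    rw [diag_eq]
    ext i j
    fin_cases i <;> fin_cases j <;> simp
  have hset : {t : ℝ | 0 < (Matrix.diagonal ![a,b] + t • !![0,1;0,0]).det} = Set.univ := by
    ext t
    simp only [Set.mem_setOf_eq, Set.mem_univ, iff_true, hAX t, Matrix.det_fin_two_of]
    nlinarith
  have hfun : (fun t : ℝ => E (Matrix.diagonal ![a,b] + t • !![0,1;0,0]))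
      = fun t : ℝ => E !![a, t; 0, b] := by
    funext t; rw [hAX t]
  rw [hset, hfun] at h
  exact h


lemma phi_mono (E : Matrix (Fin 2) (Fin 2) ℝ → ℝ)
    (hcv : ∀ a b : ℝ, 0 < a → 0 < b → ConvexOn ℝ Set.univ (fun t : ℝ => E !![a, t; 0, b]))
    (hiso : ∀ (Q R A : Matrix (Fin 2) (Fin 2) ℝ), Qᵀ * Q = 1 → Q.det = 1 →
      Rᵀ * R = 1 → R.det = 1 → 0 < A.det → E (Q * A * R) = E A)
    (a b x : ℝ) (ha : 0 < a) (hb : 0 < b) (hba : b ≤ a) (hax : a ≤ x) :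
    E (Matrix.diagonal ![a,b]) ≤ E (Matrix.diagonal ![x, a*b/x]) := by
  have hx : 0 < x := lt_of_lt_of_le ha hax
  rcases eq_or_lt_of_le hax with rfl | hax'
  · rw [show a*b/a = b by field_simp]
  -- now a < x
  obtain ⟨y, hy_def⟩ : ∃ y : ℝ, y = a*b/x := ⟨_, rfl⟩
  rw [← hy_def]
  have hy : 0 < y := by rw [hy_def]; positivity
  have hyb : y ≤ b := by
    rw [hy_def, div_le_iff₀ hx]
    nlinarith
  have hyx : y < x := lt_of_le_of_lt (le_trans hyb hba) hax'
  have hden : 0 < x^2 - y^2 := by nlinarith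
  have hnum1 : 0 ≤ a^2 - y^2 := by nlinarith [le_trans hyb hba]
  have hnum2 : 0 ≤ x^2 - a^2 := by nlinarith
  obtain ⟨p, hp_def⟩ : ∃ p : ℝ, p = Real.sqrt ((a^2 - y^2)/(x^2 - y^2)) := ⟨_, rfl⟩
  obtain ⟨q, hq_def⟩ : ∃ q : ℝ, q = Real.sqrt ((x^2 - a^2)/(x^2 - y^2)) := ⟨_, rfl⟩
  have hp2 : p^2 = (a^2 - y^2)/(x^2 - y^2) := by
    rw [hp_def]; exact Real.sq_sqrt (by positivity)
  have hq2 : q^2 = (x^2 - a^2)/(x^2 - y^2) := by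
    rw [hq_def]; exact Real.sq_sqrt (by positivity)
  have hpq : p^2 + q^2 = 1 := by rw [hp2, hq2]; field_simp; ring
  have hr2 : a^2 = x^2*p^2 + y^2*q^2 := by
    rw [hp2, hq2]; field_simp; try ring
  have hxya : x*y/a = b := by rw [hy_def]; field_simp; try ring
  have h1 := key_iso E hiso x y p q a hx hy hpq ha hr2
  have h2 := key_iso E hiso x y p (-q) a hx hy (by rw [neg_pow]; simpa using hpq) ha
    (by rw [neg_pow]; simpa using hr2)
  rw [hxya] at h1 h2
  obtain ⟨τ, hτ_def⟩ : ∃ τ : ℝ, τ = p*q*(y^2-x^2)/a := ⟨_, rfl⟩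
  rw [← hτ_def] at h1
  have hτ2 : p*(-q)*(y^2-x^2)/a = -τ := by rw [hτ_def]; ring
  rw [hτ2] at h2
  have hc := (hcv a b ha hb).2 (Set.mem_univ τ) (Set.mem_univ (-τ))
    (by norm_num : (0:ℝ) ≤ 1/2) (by norm_num : (0:ℝ) ≤ 1/2) (by norm_num)
  have hmid : (1/2 : ℝ) • τ + (1/2 : ℝ) • (-τ) = 0 := by simp only [smul_eq_mul]; ring
  rw [hmid] at hc
  simp only [smul_eq_mul] at hc
  have h0 : E !![a, (0:ℝ); 0, b] = E (Matrix.diagonal ![a,b]) := by rw [diag_eq]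
  rw [h0, h1, h2] at hc
  linarith


lemma key (E : Matrix (Fin 2) (Fin 2) ℝ → ℝ)
    (hmono : ∀ a b x : ℝ, 0 < a → 0 < b → b ≤ a → a ≤ x →
      E (Matrix.diagonal ![a,b]) ≤ E (Matrix.diagonal ![x, a*b/x]))
    (Φ : ℝ × ℝ → ℝ)
    (hΦdef : ∀ x y : ℝ, 0 < x → 0 < y → Φ (x, y) = E (Matrix.diagonal ![x, y]))
    (hΦ : ContDiffOn ℝ 1 Φ (Set.Ioi 0 ×ˢ Set.Ioi 0))
    (a b : ℝ) (ha : 0 < a) (hb : 0 < b) (hba : b ≤ a) :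
    0 ≤ a * fderiv ℝ Φ (a,b) (1, 0) - b * fderiv ℝ Φ (a,b) (0, 1) := by
  have hopen : IsOpen ((Set.Ioi (0:ℝ)) ×ˢ (Set.Ioi (0:ℝ))) := isOpen_Ioi.prod isOpen_Ioi
  have hmem : ((a,b) : ℝ × ℝ) ∈ (Set.Ioi (0:ℝ)) ×ˢ (Set.Ioi (0:ℝ)) := ⟨ha, hb⟩
  have hdiff : DifferentiableAt ℝ Φ (a,b) :=
    (hΦ.differentiableOn one_ne_zero).differentiableAt (hopen.mem_nhds hmem)
  -- inner curve
  have hinv : HasDerivAt (fun x : ℝ => a*b/x) ((a*b) * (-(a^2)⁻¹)) a := by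
    simpa [div_eq_mul_inv, mul_comm] using (hasDerivAt_inv ha.ne').const_mul (a*b)
  have hcurve : HasDerivAt (fun x : ℝ => ((x, a*b/x) : ℝ × ℝ))
      ((1 : ℝ), (a*b) * (-(a^2)⁻¹)) a := HasDerivAt.prodMk (hasDerivAt_id a) hinv
  have hca : ((a, a*b/a) : ℝ × ℝ) = (a, b) := by rw [mul_div_cancel_left₀ b ha.ne']
  have hΦat : HasFDerivAt Φ (fderiv ℝ Φ (a,b)) (a, a*b/a) := by
    rw [hca]; exact hdiff.hasFDerivAt
  have hh : HasDerivAt (fun x : ℝ => Φ (x, a*b/x))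
      (fderiv ℝ Φ (a,b) ((1 : ℝ), (a*b) * (-(a^2)⁻¹))) a :=
    hΦat.comp_hasDerivAt a hcurve
  have hhw : HasDerivWithinAt (fun x : ℝ => Φ (x, a*b/x))
      (fderiv ℝ Φ (a,b) ((1 : ℝ), (a*b) * (-(a^2)⁻¹))) (Set.Ioi a) a :=
    hh.hasDerivWithinAt
  have htend := hasDerivWithinAt_iff_tendsto_slope.mp hhw
  have hsdiff : Set.Ioi a \ {a} = Set.Ioi a := by
    apply Set.diff_singleton_eq_self; simp
  rw [hsdiff] at htend
  have hslope : ∀ᶠ x in nhdsWithin a (Set.Ioi a), 0 ≤ slope (fun x : ℝ => Φ (x, a*b/x)) a x := by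
    filter_upwards [self_mem_nhdsWithin] with x hxmem
    have hax : a < x := hxmem
    have hx : 0 < x := lt_trans ha hax
    have habx : 0 < a*b/x := by positivity
    rw [slope_def_field]
    have hmono' := hmono a b x ha hb hba hax.le
    rw [← hΦdef a b ha hb, ← hΦdef x (a*b/x) hx habx] at hmono'
    rw [mul_div_cancel_left₀ b ha.ne']
    exact div_nonneg (by linarith) (by linarith)
  have hkey : 0 ≤ fderiv ℝ Φ (a,b) ((1 : ℝ), (a*b) * (-(a^2)⁻¹)) :=
    ge_of_tendsto htend hslope
  -- linearity
  have hsplit : ((1 : ℝ), (a*b) * (-(a^2)⁻¹)) = ((1:ℝ),(0:ℝ)) + ((a*b) * (-(a^2)⁻¹)) • ((0:ℝ),(1:ℝ)) := by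
    simp [Prod.ext_iff]
  rw [hsplit, map_add, ContinuousLinearMap.map_smul] at hkey
  have hd2 : (a*b) * (-(a^2)⁻¹) = -(b/a) := by field_simp
  rw [hd2] at hkey
  simp only [smul_eq_mul] at hkey
  have hfin : a * fderiv ℝ Φ (a,b) (1, 0) - b * fderiv ℝ Φ (a,b) (0, 1)
      = a * (fderiv ℝ Φ (a,b) (1, 0) + -(b/a) * fderiv ℝ Φ (a,b) (0, 1)) := by
    field_simp
    ring
  rw [hfin]
  exact mul_nonneg ha.le hkey


lemma Esym (E : Matrix (Fin 2) (Fin 2) ℝ → ℝ)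
    (hiso : ∀ (Q R A : Matrix (Fin 2) (Fin 2) ℝ), Qᵀ * Q = 1 → Q.det = 1 →
      Rᵀ * R = 1 → R.det = 1 → 0 < A.det → E (Q * A * R) = E A)
    (x y : ℝ) (hx : 0 < x) (hy : 0 < y) :
    E (Matrix.diagonal ![y,x]) = E (Matrix.diagonal ![x,y]) := by
  have hdet : 0 < (Matrix.diagonal ![x,y]).det := by
    rw [diag_eq, Matrix.det_fin_two_of]; nlinarith
  have h := hiso !![0,-1;1,0] !![0,1;-1,0] (Matrix.diagonal ![x,y]) ?_ ?_ ?_ ?_ hdet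
  · rw [← h, diag_eq x y, diag_eq y x, Matrix.mul_fin_two, Matrix.mul_fin_two]
    norm_num
  · rw [tr2, Matrix.mul_fin_two, Matrix.one_fin_two]; norm_num
  · rw [Matrix.det_fin_two_of]; norm_num
  · rw [tr2, Matrix.mul_fin_two, Matrix.one_fin_two]; norm_num
  · rw [Matrix.det_fin_two_of]; norm_num

theorem stmt5 (E : Matrix (Fin 2) (Fin 2) ℝ → ℝ)
    (hrc : RankOneConvexOnPos E)
    (hiso : ∀ (Q R A : Matrix (Fin 2) (Fin 2) ℝ), Qᵀ * Q = 1 → Q.det = 1 →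
      Rᵀ * R = 1 → R.det = 1 → 0 < A.det → E (Q * A * R) = E A)
    (Φ : ℝ × ℝ → ℝ) (hΦdef : ∀ x y : ℝ, Φ (x, y) = E (Matrix.diagonal ![x, y]))
    (hΦ : ContDiffOn ℝ 1 Φ (Set.Ioi 0 ×ˢ Set.Ioi 0))
    (l₁ l₂ : ℝ) (h1 : 0 < l₁) (h2 : 0 < l₂) :
    0 ≤ (l₁ * fderiv ℝ Φ (l₁, l₂) (1, 0) - l₂ * fderiv ℝ Φ (l₁, l₂) (0, 1)) * (l₁ - l₂) := by
  have hmono : ∀ a b x : ℝ, 0 < a → 0 < b → b ≤ a → a ≤ x →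
      E (Matrix.diagonal ![a,b]) ≤ E (Matrix.diagonal ![x, a*b/x]) :=
    fun a b x ha hb hba hax =>
      phi_mono E (fun a b ha hb => conv_f E hrc a b ha hb) hiso a b x ha hb hba hax
  rcases le_total l₂ l₁ with hle | hle
  · have hk := key E hmono Φ (fun x y _ _ => hΦdef x y) hΦ l₁ l₂ h1 h2 hle
    exact mul_nonneg hk (by linarith)
  · -- swapped case
    set s : ℝ × ℝ →L[ℝ] ℝ × ℝ :=
      (ContinuousLinearMap.snd ℝ ℝ ℝ).prod (ContinuousLinearMap.fst ℝ ℝ ℝ) with hs_def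
    have hswap : ∀ z : ℝ × ℝ, s z = (z.2, z.1) := fun z => rfl
    set Φ' : ℝ × ℝ → ℝ := fun z => Φ (z.2, z.1) with hΦ'_def
    have hΦ'def : ∀ x y : ℝ, 0 < x → 0 < y → Φ' (x, y) = E (Matrix.diagonal ![x, y]) := by
      intro x y hx hy
      show Φ (y, x) = _
      rw [hΦdef y x, Esym E hiso y x hy hx]
    have hΦ'cd : ContDiffOn ℝ 1 Φ' (Set.Ioi 0 ×ˢ Set.Ioi 0) := by
      apply hΦ.comp ((ContDiff.prodMk contDiff_snd contDiff_fst).contDiffOn)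
      intro z hz
      exact ⟨hz.2, hz.1⟩
    have hk := key E hmono Φ' hΦ'def hΦ'cd l₂ l₁ h2 h1 hle
    -- relate fderiv Φ' to fderiv Φ
    have hopen : IsOpen ((Set.Ioi (0:ℝ)) ×ˢ (Set.Ioi (0:ℝ))) := isOpen_Ioi.prod isOpen_Ioi
    have hdiff : DifferentiableAt ℝ Φ (l₁, l₂) :=
      (hΦ.differentiableOn one_ne_zero).differentiableAt (hopen.mem_nhds ⟨h1, h2⟩)
    have hcomp : HasFDerivAt Φ' ((fderiv ℝ Φ (l₁, l₂)).comp s) (l₂, l₁) :=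
      hdiff.hasFDerivAt.comp (l₂, l₁) s.hasFDerivAt
    rw [hcomp.fderiv] at hk
    simp only [ContinuousLinearMap.comp_apply] at hk
    have e1 : s ((1:ℝ), (0:ℝ)) = ((0:ℝ), (1:ℝ)) := rfl
    have e2 : s ((0:ℝ), (1:ℝ)) = ((1:ℝ), (0:ℝ)) := rfl
    rw [e1, e2] at hk
    nlinarith [hk]
end

section
/- For every real p ≥ 2 and every w ∈ ℂ, |1 + w|^p ≥ 1 + p·Re(w) + (p/2)·|w|². Moreover the constant p/2 is the largest possible: for every c > p/2 there exists w ∈ ℂ with |1 + w|^p < 1 + p·Re(w) + c·|w|². -/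
open MeasureTheory Matrix

open MeasureTheory Matrix

theorem stmt6 (p : ℝ) (hp : 2 ≤ p) :
    (∀ w : ℂ, 1 + p * w.re + p / 2 * ‖w‖ ^ 2 ≤ ‖1 + w‖ ^ p) ∧
    (∀ c : ℝ, p / 2 < c → ∃ w : ℂ,
      ‖1 + w‖ ^ p < 1 + p * w.re + c * ‖w‖ ^ 2) := by
  have hq : (1:ℝ) ≤ p / 2 := by linarith
  constructor
  · intro w
    set r := w.re
    set s := ‖w‖
    have hrs : |r| ≤ s := Complex.abs_re_le_norm w
    have hs : 0 ≤ s := norm_nonneg w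
    set x := 2 * r + s ^ 2 with hx
    have hx1 : -1 ≤ x := by
      have h := abs_le.mp hrs
      nlinarith [sq_nonneg (s - 1), h.1]
    have habs : ‖1 + w‖ ^ 2 = 1 + x := by
      rw [Complex.sq_norm, Complex.normSq_apply]
      have hs2 : s ^ 2 = w.re ^ 2 + w.im ^ 2 := by
        rw [show s = ‖w‖ from rfl, Complex.sq_norm, Complex.normSq_apply]; ring
      simp only [Complex.add_re, Complex.add_im, Complex.one_re, Complex.one_im, hx]
      nlinarith [hs2]
    have hrw : ‖1 + w‖ ^ p = (1 + x) ^ (p / 2) := by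
      rw [← habs, ← Real.rpow_natCast (‖1 + w‖) 2,
        ← Real.rpow_mul (norm_nonneg _)]
      congr 1
      push_cast; ring
    rw [hrw]
    have := one_add_mul_self_le_rpow_one_add hx1 hq
    calc 1 + p * r + p / 2 * s ^ 2 = 1 + p / 2 * x := by rw [hx]; ring
      _ ≤ (1 + x) ^ (p / 2) := this
  · intro c hc
    -- slope argument
    have hd1 : HasDerivAt (fun t : ℝ => 1 + t) 1 0 := by
      simpa using (hasDerivAt_id (0:ℝ)).const_add 1
    have hd : HasDerivAt (fun t : ℝ => (1 + t) ^ (p / 2)) (p / 2) 0 := by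
      have := hd1.rpow_const (p := p / 2) (by left; norm_num)
      simpa using this
    rw [hasDerivAt_iff_tendsto_slope] at hd
    have hev : ∀ᶠ t in nhdsWithin (0:ℝ) (Set.Ioi 0),
        slope (fun t : ℝ => (1 + t) ^ (p / 2)) 0 t < c := by
      apply (hd.eventually_lt_const hc).filter_mono
      exact nhdsWithin_mono 0 (fun t ht => (Set.mem_Ioi.mp ht).ne')
    obtain ⟨t, hlt, ht⟩ := (hev.and self_mem_nhdsWithin).exists
    replace ht : 0 < t := ht
    rw [slope_def_field] at hlt
    have hf0 : ((1:ℝ) + 0) ^ (p / 2) = 1 := by norm_num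
    have hkey : (1 + t) ^ (p / 2) < 1 + c * t := by
      rw [hf0] at hlt
      have : ((1 + t) ^ (p / 2) - 1) / t < c := by simpa using hlt
      have := (div_lt_iff₀ ht).mp this
      linarith
    refine ⟨Complex.I * Real.sqrt t, ?_⟩
    set u := Real.sqrt t with hu
    have hu0 : 0 ≤ u := Real.sqrt_nonneg t
    have hut : u ^ 2 = t := Real.sq_sqrt ht.le
    have hre : (Complex.I * (u:ℝ)).re = 0 := by simp
    have habsw : ‖Complex.I * (u:ℝ)‖ = u := by
      simp [Complex.norm_def, Complex.normSq_apply, Real.sqrt_mul_self hu0, hu0]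
    have habs1 : ‖1 + Complex.I * (u:ℝ)‖ ^ 2 = 1 + t := by
      rw [Complex.sq_norm, Complex.normSq_apply]
      simp [← hut]
      ring
    have hrw : ‖1 + Complex.I * (u:ℝ)‖ ^ p = (1 + t) ^ (p / 2) := by
      rw [← habs1, ← Real.rpow_natCast (‖(1 + Complex.I * (u:ℝ))‖) 2,
        ← Real.rpow_mul (norm_nonneg _)]
      congr 1
      push_cast; ring
    rw [hrw, hre, habsw, hut]
    simpa using hkey
end

section
/- Let b₁ ∈ ℂ with |b₁| < 1 and let R(z) = z + b₁/z. Let g be holomorphic on {z ∈ ℂ : |z| > 1} and suppose g(z) = z + b₁/z + φ(z) there, where φ is holomorphic on {|z| > 1} and z·φ(z) → 0 as |z| → ∞. Then R is injective on {|z| > 1}, and the map h = g ∘ R⁻¹, defined and holomorphic on the open set R({|z| > 1}), satisfies h(z) = z + O(z⁻²) as |z| → ∞: there exist constants C, M > 0 such that |h(z) − z| ≤ C·|z|⁻² for every z ∈ R({|z| > 1}) with |z| ≥ M. -/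
open MeasureTheory Matrix

open MeasureTheory Matrix

open Filter Topology Metric Set

lemma aux_decay (φ : ℂ → ℂ)
    (hφ : DifferentiableOn ℂ φ {z : ℂ | 1 < ‖z‖})
    (hdecay : Filter.Tendsto (fun z => z * φ z)
      (Filter.comap (fun z : ℂ => ‖z‖) Filter.atTop) (nhds 0)) :
    ∃ C > (0:ℝ), ∀ z : ℂ, 2 ≤ ‖z‖ →
      ‖φ z‖ ≤ C / ‖z‖ ^ 2 := by
  set u : ℂ → ℂ := fun w => φ w⁻¹ with hu_def
  -- the inversion map sends 𝓝[≠] 0 to the filter at infinity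
  have habs : Tendsto (fun w : ℂ => ‖w‖) (𝓝[≠] (0:ℂ)) (𝓝[>] (0:ℝ)) := by
    rw [tendsto_nhdsWithin_iff]
    constructor
    · have := (continuous_norm.tendsto 0).mono_left (nhdsWithin_le_nhds (s := {(0:ℂ)}ᶜ))
      simpa using this
    · filter_upwards [eventually_mem_nhdsWithin] with w hw
      exact Set.mem_Ioi.2 (by simpa using (norm_pos_iff.mpr (by simpa using hw)))
  have hinvT : Tendsto (fun w : ℂ => w⁻¹) (𝓝[≠] (0:ℂ))
      (Filter.comap (fun z : ℂ => ‖z‖) Filter.atTop) := by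
    rw [Filter.tendsto_comap_iff]
    have : Tendsto (fun w : ℂ => (‖w‖)⁻¹) (𝓝[≠] (0:ℂ)) atTop :=
      tendsto_inv_nhdsGT_zero.comp habs
    simpa [Function.comp_def, norm_inv] using this
  have hq : Tendsto (fun w : ℂ => w⁻¹ * φ w⁻¹) (𝓝[≠] (0:ℂ)) (𝓝 0) := hdecay.comp hinvT
  have hu0 : Tendsto u (𝓝[≠] (0:ℂ)) (𝓝 0) := by
    have h1 : Tendsto (fun w : ℂ => w * (w⁻¹ * φ w⁻¹)) (𝓝[≠] (0:ℂ)) (𝓝 0) := by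
      have := (tendsto_id.mono_left (nhdsWithin_le_nhds (s := {(0:ℂ)}ᶜ))).mul hq
      simpa using this
    refine h1.congr' ?_
    filter_upwards [eventually_mem_nhdsWithin] with w hw
    have hw0 : w ≠ 0 := by simpa using hw
    simp only [hu_def]
    field_simp
  have hball : Metric.ball (0:ℂ) 1 ∈ 𝓝 (0:ℂ) := Metric.ball_mem_nhds 0 one_pos
  have hu_diff : DifferentiableOn ℂ u (Metric.ball (0:ℂ) 1 \ {0}) := by
    intro w hw
    have hw0 : w ≠ 0 := by simpa using hw.2
    have hwlt : ‖w‖ < 1 := by simpa [Complex.dist_eq] using hw.1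
    have hwpos : 0 < ‖w‖ := norm_pos_iff.mpr hw0
    have hmem : 1 < ‖w⁻¹‖ := by
      rw [norm_inv]
      exact (one_lt_inv₀ hwpos).2 hwlt
    have : DifferentiableAt ℂ u w := by
      have h1 : DifferentiableAt ℂ φ w⁻¹ :=
        hφ.differentiableAt ((isOpen_lt continuous_const continuous_norm).mem_nhds hmem)
      exact h1.comp w (differentiableAt_inv hw0)
    exact this.differentiableWithinAt
  have ho : (fun w => u w - u 0) =o[𝓝[≠] (0:ℂ)] fun w => (w - 0)⁻¹ := by
    apply Filter.IsBoundedUnder.isLittleO_sub_self_inv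
    exact ((hu0.sub_const (u 0)).norm).isBoundedUnder_le
  set v : ℂ → ℂ := Function.update u 0 (limUnder (𝓝[≠] (0:ℂ)) u) with hv_def
  have hv : DifferentiableOn ℂ v (Metric.ball (0:ℂ) 1) :=
    Complex.differentiableOn_update_limUnder_of_isLittleO hball hu_diff ho
  have hveq : ∀ w : ℂ, w ≠ 0 → v w = u w := fun w hw => Function.update_of_ne hw _ _
  have hv0 : v 0 = 0 := by
    rw [hv_def, Function.update_self, hu0.limUnder_eq]
  have hd0 : deriv v 0 = 0 := by
    have hdv : HasDerivAt v (deriv v 0) 0 := (hv.differentiableAt hball).hasDerivAt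
    rw [hasDerivAt_iff_tendsto_slope] at hdv
    have : Tendsto (slope v 0) (𝓝[≠] (0:ℂ)) (𝓝 0) := by
      refine hq.congr' ?_
      filter_upwards [eventually_mem_nhdsWithin] with w hw
      have hw0 : w ≠ 0 := by simpa using hw
      rw [slope_def_field, hveq w hw0, hv0]
      simp only [hu_def]
      field_simp
      ring
    exact tendsto_nhds_unique hdv this
  set v2 : ℂ → ℂ := dslope (dslope v 0) 0 with hv2_def
  have hv2 : DifferentiableOn ℂ v2 (Metric.ball (0:ℂ) 1) :=
    (Complex.differentiableOn_dslope hball).2 ((Complex.differentiableOn_dslope hball).2 hv)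
  have hcont : ContinuousOn v2 (Metric.closedBall (0:ℂ) 2⁻¹) :=
    hv2.continuousOn.mono (Metric.closedBall_subset_ball (by norm_num))
  obtain ⟨C, hC⟩ := (isCompact_closedBall (0:ℂ) 2⁻¹).exists_bound_of_continuousOn hcont
  refine ⟨max C 1, lt_of_lt_of_le one_pos (le_max_right _ _), fun z hz => ?_⟩
  have hz0 : z ≠ 0 := by
    intro h; rw [h] at hz; simp at hz; linarith
  set w : ℂ := z⁻¹ with hw_def
  have hw0 : w ≠ 0 := inv_ne_zero hz0
  have hzpos : (0:ℝ) < ‖z‖ := norm_pos_iff.mpr hz0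
  have hwabs : ‖w‖ = (‖z‖)⁻¹ := norm_inv _
  have hwball : w ∈ Metric.closedBall (0:ℂ) 2⁻¹ := by
    simp only [Metric.mem_closedBall, Complex.dist_eq, sub_zero]
    rw [hwabs]
    exact inv_anti₀ (by norm_num) hz
  -- v2 w = v w / w^2
  have hkey : v w = w ^ 2 * v2 w := by
    rw [hv2_def, dslope_of_ne _ hw0, slope_def_field, dslope_same, hd0,
      dslope_of_ne _ hw0, slope_def_field, hv0]
    field_simp
    ring
  have hφz : φ z = v w := by
    rw [hveq w hw0, hu_def]
    simp [hw_def]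
  rw [hφz, hkey]
  rw [norm_mul, norm_pow, hwabs]
  have hb2 : ‖v2 w‖ ≤ max C 1 := le_trans (hC w hwball) (le_max_left _ _)
  rw [div_eq_mul_inv, ← inv_pow]
  have hnn : (0:ℝ) ≤ ((‖z‖)⁻¹) ^ 2 := by positivity
  calc ((‖z‖)⁻¹) ^ 2 * ‖v2 w‖
      ≤ ((‖z‖)⁻¹) ^ 2 * max C 1 := by
        exact mul_le_mul_of_nonneg_left hb2 hnn
    _ = max C 1 * ((‖z‖)⁻¹) ^ 2 := by ring

theorem stmt8 (b : ℂ) (hb : ‖b‖ < 1)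
    (R : ℂ → ℂ) (hR : ∀ z, R z = z + b / z)
    (g φ : ℂ → ℂ)
    (hg : DifferentiableOn ℂ g {z : ℂ | 1 < ‖z‖})
    (hφ : DifferentiableOn ℂ φ {z : ℂ | 1 < ‖z‖})
    (hexp : ∀ z : ℂ, 1 < ‖z‖ → g z = z + b / z + φ z)
    (hdecay : Filter.Tendsto (fun z => z * φ z)
      (Filter.comap (fun z : ℂ => ‖z‖) Filter.atTop) (nhds 0)) :
    Set.InjOn R {z : ℂ | 1 < ‖z‖} ∧
    IsOpen (R '' {z : ℂ | 1 < ‖z‖}) ∧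
    DifferentiableOn ℂ (fun w => g (Function.invFunOn R {z : ℂ | 1 < ‖z‖} w))
      (R '' {z : ℂ | 1 < ‖z‖}) ∧
    ∃ C > (0:ℝ), ∃ M > (0:ℝ), ∀ w ∈ R '' {z : ℂ | 1 < ‖z‖}, M ≤ ‖w‖ →
      ‖g (Function.invFunOn R {z : ℂ | 1 < ‖z‖} w) - w‖
        ≤ C / ‖w‖ ^ 2 := by
  set S : Set ℂ := {z : ℂ | 1 < ‖z‖} with hSdef
  have hSopen : IsOpen S := isOpen_lt continuous_const continuous_norm
  have hzne : ∀ z ∈ S, z ≠ 0 := by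
    intro z hz h
    rw [h] at hz
    simp only [hSdef, Set.mem_setOf_eq, norm_zero] at hz
    linarith
  have hinj : Set.InjOn R S := by
    intro z hz w hw h
    have hz1 : 1 < ‖z‖ := hz
    have hw1 : 1 < ‖w‖ := hw
    have hz0 : z ≠ 0 := hzne z hz
    have hw0 : w ≠ 0 := hzne w hw
    have hzw : z * w - b ≠ 0 := by
      intro hc
      have hc' : z * w = b := by linear_combination hc
      have : ‖z * w‖ = ‖b‖ := by rw [hc']
      rw [norm_mul] at this
      nlinarith [norm_nonneg b]
    have key : (z - w) * (z * w - b) = 0 := by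
      rw [hR, hR] at h
      field_simp at h
      linear_combination h
    rcases mul_eq_zero.1 key with h1 | h2
    · exact sub_eq_zero.1 h1
    · exact absurd h2 hzw
  have hds : ∀ z ∈ S, HasStrictDerivAt R (1 - b / z ^ 2) z := by
    intro z hz
    have hz0 : z ≠ 0 := hzne z hz
    have h1 : HasStrictDerivAt (fun z : ℂ => z + b * z⁻¹) (1 + b * (-(z ^ 2)⁻¹)) z :=
      (hasStrictDerivAt_id z).add ((hasStrictDerivAt_inv hz0).const_mul b)
    have he : (fun z : ℂ => z + b * z⁻¹) = R := by
      funext x; rw [hR, div_eq_mul_inv]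
    rw [he] at h1
    convert h1 using 1
    field_simp
    ring
  have hdne : ∀ z ∈ S, (1 - b / z ^ 2) ≠ 0 := by
    intro z hz h
    have hz1 : 1 < ‖z‖ := hz
    have hz0 : z ≠ 0 := hzne z hz
    have hbz : b = z ^ 2 := by
      field_simp at h
      linear_combination -h
    have habs : ‖b‖ = ‖z‖ ^ 2 := by rw [hbz, norm_pow]
    nlinarith
  have hopen : IsOpen (R '' S) := by
    rw [isOpen_iff_mem_nhds]
    rintro w ⟨z, hz, rfl⟩
    rw [← (hds z hz).map_nhds_eq (hdne z hz)]
    exact Filter.image_mem_map (hSopen.mem_nhds hz)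
  have hleft : ∀ z ∈ S, Function.invFunOn R S (R z) = z := fun z hz =>
    hinj.leftInvOn_invFunOn hz
  have hdiff : DifferentiableOn ℂ (fun w => g (Function.invFunOn R S w)) (R '' S) := by
    rintro w ⟨z, hz, rfl⟩
    apply DifferentiableAt.differentiableWithinAt
    set F := (hds z hz).hasStrictFDerivAt_equiv (hdne z hz) with hF
    set linv : ℂ → ℂ := (hds z hz).localInverse R _ z (hdne z hz) with hlinv
    have hstrict : HasStrictDerivAt linv (1 - b / z ^ 2)⁻¹ (R z) :=
      (hds z hz).to_localInverse (hdne z hz)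
    have hla : linv (R z) = z := F.localInverse_apply_image
    have hEv1 : ∀ᶠ w' in 𝓝 (R z), R (linv w') = w' := F.eventually_right_inverse
    have hEv2 : ∀ᶠ w' in 𝓝 (R z), linv w' ∈ S := by
      have hcont : ContinuousAt linv (R z) := hstrict.hasDerivAt.differentiableAt.continuousAt
      have := hcont.preimage_mem_nhds (by rw [hla]; exact hSopen.mem_nhds hz)
      filter_upwards [this] with w' hw' using hw'
    have heq : (fun w => g (Function.invFunOn R S w)) =ᶠ[𝓝 (R z)] fun w => g (linv w) := by
      filter_upwards [hEv1, hEv2] with w' h1 h2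
      congr 1
      have hex : ∃ a ∈ S, R a = w' := ⟨linv w', h2, h1⟩
      refine hinj (Function.invFunOn_mem hex) h2 ?_
      rw [Function.invFunOn_eq hex, h1]
    have hgd : DifferentiableAt ℂ (fun w => g (linv w)) (R z) := by
      have h1 : DifferentiableAt ℂ g (linv (R z)) := by
        rw [hla]; exact hg.differentiableAt (hSopen.mem_nhds hz)
      exact h1.comp (R z) hstrict.hasDerivAt.differentiableAt
    exact hgd.congr_of_eventuallyEq heq
  refine ⟨hinj, hopen, hdiff, ?_⟩
  obtain ⟨C, hC, hCb⟩ := aux_decay φ hφ hdecay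
  refine ⟨4 * C, by linarith, 4, by norm_num, ?_⟩
  rintro w ⟨z, hz, rfl⟩ hM
  rw [hleft z hz]
  have hz1 : 1 < ‖z‖ := hz
  have hz0 : z ≠ 0 := hzne z hz
  have hRz : ‖R z‖ ≤ ‖z‖ + 1 := by
    rw [hR]
    refine le_trans (norm_add_le _ _) ?_
    have h2 : ‖b / z‖ ≤ 1 := by
      rw [norm_div, div_le_one (by linarith)]
      linarith
    linarith
  have hz2 : 2 ≤ ‖z‖ := by linarith
  have hb2 := hCb z hz2
  have hgz : g z - R z = φ z := by rw [hexp z hz1, hR]; ring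
  rw [hgz]
  have hpos1 : (0:ℝ) < ‖z‖ ^ 2 := by positivity
  have hpos2 : (0:ℝ) < ‖R z‖ ^ 2 := by nlinarith
  have hfin : C / ‖z‖ ^ 2 ≤ 4 * C / ‖R z‖ ^ 2 := by
    have h3 : ‖R z‖ ^ 2 ≤ (‖z‖ + 1) ^ 2 := by
      nlinarith [norm_nonneg (R z)]
    have h4 : (‖z‖ + 1) ^ 2 ≤ 4 * ‖z‖ ^ 2 := by nlinarith
    rw [div_le_div_iff₀ hpos1 hpos2]
    nlinarith [h3, h4, hC]
  linarith
end

section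
/- Let m, n ≥ 1 and let E : ℝ^{m×n} → ℝ ∪ {±∞} be rank-one convex, and suppose E(A₀) is finite for some A₀ in the topological interior of dom(E). Let 𝒰 be the connected component of the topological interior of dom(E) containing A₀. Then E(B) > −∞ for every B ∈ 𝒰, and more generally E(B + tX) > −∞ for every B ∈ 𝒰, every rank-one matrix X, and every t ∈ ℝ. -/
open MeasureTheory Matrix

open MeasureTheory Matrix


lemma ereal_exists_real_ge (x : EReal) (h : x ≠ ⊤) : ∃ r : ℝ, x ≤ (r : EReal) := by
  induction x using EReal.rec with
  | bot => exact ⟨0, bot_le⟩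
  | coe r => exact ⟨r, le_refl _⟩
  | top => exact absurd rfl h

lemma ereal_eq_bot_of_forall (x : EReal) (h : ∀ M : ℝ, x ≤ (M : EReal)) : x = ⊥ := by
  induction x using EReal.rec with
  | bot => rfl
  | coe r => have := h (r - 1); rw [EReal.coe_le_coe_iff] at this; linarith
  | top => simpa using h 0

lemma rank_stdBasisMatrix_one {m n : ℕ} (i : Fin m) (j : Fin n) :
    (Matrix.single i j (1:ℝ)).rank = 1 := by
  have h : LinearMap.range (Matrix.single i j (1:ℝ)).mulVecLin
      = Submodule.span ℝ {Function.update (0 : Fin m → ℝ) i 1} := by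
    apply le_antisymm
    · rintro _ ⟨x, rfl⟩
      rw [Matrix.mulVecLin_apply, Matrix.single_mulVec]
      rw [Submodule.mem_span_singleton]
      refine ⟨x j, ?_⟩
      ext k
      simp [Function.update_apply]
    · rw [Submodule.span_le, Set.singleton_subset_iff]
      refine ⟨Function.update (0 : Fin n → ℝ) j 1, ?_⟩
      rw [Matrix.mulVecLin_apply, Matrix.single_mulVec]
      simp
  rw [Matrix.rank, h, finrank_span_singleton]
  intro hc
  have := congrFun hc i
  simp at this

lemma bot_segment {m n : ℕ} {E : Matrix (Fin m) (Fin n) ℝ → EReal}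
    (hrc : RankOneConvexE E) {A X : Matrix (Fin m) (Fin n) ℝ} (hX : X.rank = 1)
    (hA : E A = ⊥) {b : ℝ} (hb : E (A + b • X) ≠ ⊤) {l : ℝ} (hl0 : 0 < l) (hl1 : l < 1) :
    E (A + (l * b) • X) = ⊥ := by
  obtain ⟨y₀, hy₀⟩ := ereal_exists_real_ge _ hb
  apply ereal_eq_bot_of_forall
  intro M
  set ya : ℝ := (M - l * y₀) / (1 - l) with hya
  have hp : ((0 : ℝ), ya) ∈ {q : ℝ × ℝ | E (A + q.1 • X) ≤ (q.2 : EReal)} := by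
    simp only [Set.mem_setOf_eq, zero_smul, add_zero, hA]
    exact bot_le
  have hq : ((b : ℝ), y₀) ∈ {q : ℝ × ℝ | E (A + q.1 • X) ≤ (q.2 : EReal)} := hy₀
  have hcomb := hrc A X hX hp hq (by linarith : (0:ℝ) ≤ 1 - l) (le_of_lt hl0) (by ring)
  have h1 : ((1 - l) • ((0 : ℝ), ya) + l • ((b : ℝ), y₀)) = (l * b, M) := by
    have : (1 - l) * ya + l * y₀ = M := by
      rw [hya, mul_div_assoc', mul_comm, mul_div_assoc,
        div_self (by linarith : (1:ℝ) - l ≠ 0), mul_one]; ring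
    simp [Prod.ext_iff, this]
  rw [h1] at hcomb
  exact hcomb

lemma sum_std_apply {m n : ℕ} (D : Matrix (Fin m) (Fin n) ℝ)
    (s : Finset (Fin m × Fin n)) (i : Fin m) (j : Fin n) :
    (∑ q ∈ s, D q.1 q.2 • Matrix.single q.1 q.2 (1:ℝ)) i j
      = if (i, j) ∈ s then D i j else 0 := by
  have hterm : ∀ q ∈ s, (D q.1 q.2 • Matrix.single q.1 q.2 (1:ℝ)) i j
      = if q = (i, j) then D i j else 0 := by
    intro q _
    by_cases h : q = (i, j)
    · subst h; simp [Matrix.single]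
    · have h2 : ¬(q.1 = i ∧ q.2 = j) := fun ⟨h1, h2⟩ => h (Prod.ext h1 h2)
      simp only [Matrix.smul_apply, Matrix.single, Matrix.of_apply,
        smul_eq_mul, if_neg h, if_neg h2, mul_zero]
  rw [Matrix.sum_apply, Finset.sum_congr rfl hterm, Finset.sum_ite_eq' s (i, j)]

lemma walk_bot {m n : ℕ} {E : Matrix (Fin m) (Fin n) ℝ → EReal}
    (hrc : RankOneConvexE E) (C B : Matrix (Fin m) (Fin n) ℝ) (hC : E C = ⊥)
    (H : ∀ W : Matrix (Fin m) (Fin n) ℝ,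
      (∀ i j, |W i j - C i j| ≤ 2 * |B i j - C i j|) → E W ≠ ⊤) :
    E B = ⊥ := by
  set D := B - C with hD
  have key : ∀ s : Finset (Fin m × Fin n),
      E (C + ∑ q ∈ s, D q.1 q.2 • Matrix.single q.1 q.2 (1:ℝ)) = ⊥ := by
    intro s
    induction s using Finset.induction_on with
    | empty => simpa using hC
    | @insert p s' hp ih =>
      rw [Finset.sum_insert hp]
      have hre : C + (D p.1 p.2 • Matrix.single p.1 p.2 (1:ℝ)
          + ∑ q ∈ s', D q.1 q.2 • Matrix.single q.1 q.2 (1:ℝ))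
          = (C + ∑ q ∈ s', D q.1 q.2 • Matrix.single q.1 q.2 (1:ℝ))
            + D p.1 p.2 • Matrix.single p.1 p.2 (1:ℝ) := by
        abel
      rw [hre]
      by_cases hd : D p.1 p.2 = 0
      · simpa [hd] using ih
      · set C' := C + ∑ q ∈ s', D q.1 q.2 • Matrix.single q.1 q.2 (1:ℝ) with hC'
        have hb : E (C' + (2 * D p.1 p.2) • Matrix.single p.1 p.2 (1:ℝ)) ≠ ⊤ := by
          apply H
          intro i j
          have hBC : B i j - C i j = D i j := by simp [hD]
          rw [hBC]
          have e1 : (C' + (2 * D p.1 p.2) • Matrix.single p.1 p.2 (1:ℝ)) i j - C i j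
              = (if (i, j) ∈ s' then D i j else 0)
                + (2 * D p.1 p.2) * (if p.1 = i ∧ p.2 = j then 1 else 0) := by
            simp only [hC', Matrix.add_apply, Matrix.smul_apply, smul_eq_mul]
            rw [sum_std_apply]
            simp only [Matrix.single, Matrix.of_apply]
            ring
          rw [e1]
          by_cases h1 : p = (i, j)
          · have h2 : (i, j) ∉ s' := h1 ▸ hp
            have h3 : p.1 = i ∧ p.2 = j := by rw [h1]; exact ⟨rfl, rfl⟩
            rw [if_neg h2, if_pos h3, h3.1, h3.2]
            have : (0:ℝ) + 2 * D i j * 1 = 2 * D i j := by ring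
            rw [this, abs_mul, abs_two]
          · have h3 : ¬(p.1 = i ∧ p.2 = j) := fun ⟨ha, hb⟩ => h1 (Prod.ext ha hb)
            rw [if_neg h3, mul_zero, add_zero]
            by_cases h4 : (i, j) ∈ s'
            · rw [if_pos h4]
              have := abs_nonneg (D i j); linarith [le_abs_self (D i j)]
            · rw [if_neg h4]; simp [abs_nonneg]
        have := bot_segment hrc (rank_stdBasisMatrix_one p.1 p.2) ih hb
          (by norm_num : (0:ℝ) < 1/2) (by norm_num : (1:ℝ)/2 < 1)
        have h5 : (1/2 : ℝ) * (2 * D p.1 p.2) = D p.1 p.2 := by ring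
        rwa [h5] at this
  have hall := key Finset.univ
  have : C + ∑ q : Fin m × Fin n, D q.1 q.2 • Matrix.single q.1 q.2 (1:ℝ) = B := by
    ext i j
    rw [Matrix.add_apply, sum_std_apply, if_pos (Finset.mem_univ _)]
    simp [hD]
  rwa [this] at hall

attribute [local instance] Matrix.normedAddCommGroup Matrix.normedSpace

lemma entry_norm_le {m n : ℕ} (A : Matrix (Fin m) (Fin n) ℝ) (i : Fin m) (j : Fin n) :
    |A i j| ≤ ‖A‖ := by
  have := Matrix.norm_entry_le_entrywise_sup_norm A (i := i) (j := j)
  rwa [Real.norm_eq_abs] at this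

lemma local_iff {m n : ℕ} {E : Matrix (Fin m) (Fin n) ℝ → EReal}
    (hrc : RankOneConvexE E) {B : Matrix (Fin m) (Fin n) ℝ}
    (hB : B ∈ interior {A : Matrix (Fin m) (Fin n) ℝ | E A < ⊤}) :
    ∃ ε > 0, ∀ C : Matrix (Fin m) (Fin n) ℝ, dist C B < ε →
      C ∈ interior {A : Matrix (Fin m) (Fin n) ℝ | E A < ⊤} ∧ (E C = ⊥ ↔ E B = ⊥) := by
  obtain ⟨ε, hε, hball⟩ := Metric.isOpen_iff.1 isOpen_interior B hB
  have hdom : ∀ W : Matrix (Fin m) (Fin n) ℝ, dist W B < ε → E W ≠ ⊤ := by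
    intro W hW
    have : W ∈ interior {A : Matrix (Fin m) (Fin n) ℝ | E A < ⊤} :=
      hball (Metric.mem_ball.2 hW)
    exact (interior_subset this).ne
  refine ⟨ε / 3, by linarith, fun C hC => ?_⟩
  have hCB : ‖C - B‖ < ε / 3 := by rwa [← dist_eq_norm]
  have hCS : C ∈ interior {A : Matrix (Fin m) (Fin n) ℝ | E A < ⊤} :=
    hball (Metric.mem_ball.2 (by linarith))
  refine ⟨hCS, ?_, ?_⟩
  · intro hCbot
    apply walk_bot hrc C B hCbot
    intro W hW
    apply hdom
    have h1 : ‖W - C‖ ≤ 2 * ‖B - C‖ := by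
      rw [Matrix.norm_le_iff (by positivity)]
      intro i j
      calc ‖(W - C) i j‖ = |W i j - C i j| := by rw [Matrix.sub_apply]; rfl
        _ ≤ 2 * |B i j - C i j| := hW i j
        _ = 2 * |(B - C) i j| := by rw [Matrix.sub_apply]
        _ ≤ 2 * ‖B - C‖ := by linarith [entry_norm_le (B - C) i j]
    have h2 : ‖B - C‖ = ‖C - B‖ := norm_sub_rev _ _
    have h3 : dist W B ≤ ‖W - C‖ + ‖C - B‖ := by
      rw [dist_eq_norm]
      calc ‖W - B‖ = ‖(W - C) + (C - B)‖ := by abel_nf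
        _ ≤ ‖W - C‖ + ‖C - B‖ := norm_add_le _ _
    linarith
  · intro hBbot
    apply walk_bot hrc B C hBbot
    intro W hW
    apply hdom
    have h1 : ‖W - B‖ ≤ 2 * ‖C - B‖ := by
      rw [Matrix.norm_le_iff (by positivity)]
      intro i j
      calc ‖(W - B) i j‖ = |W i j - B i j| := by rw [Matrix.sub_apply]; rfl
        _ ≤ 2 * |C i j - B i j| := hW i j
        _ = 2 * |(C - B) i j| := by rw [Matrix.sub_apply]
        _ ≤ 2 * ‖C - B‖ := by linarith [entry_norm_le (C - B) i j]
    rw [dist_eq_norm]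
    linarith

theorem stmt16 {m n : ℕ} (hm : 1 ≤ m) (hn : 1 ≤ n)
    (E : Matrix (Fin m) (Fin n) ℝ → EReal) (hrc : RankOneConvexE E)
    (A₀ : Matrix (Fin m) (Fin n) ℝ)
    (hA₀ : A₀ ∈ interior {A : Matrix (Fin m) (Fin n) ℝ | E A < ⊤})
    (hfin : E A₀ ≠ ⊤ ∧ E A₀ ≠ ⊥) :
    (∀ B ∈ connectedComponentIn
        (interior {A : Matrix (Fin m) (Fin n) ℝ | E A < ⊤}) A₀, E B ≠ ⊥) ∧
    (∀ B ∈ connectedComponentIn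
        (interior {A : Matrix (Fin m) (Fin n) ℝ | E A < ⊤}) A₀,
      ∀ X : Matrix (Fin m) (Fin n) ℝ, X.rank = 1 → ∀ t : ℝ, E (B + t • X) ≠ ⊥) := by
  set S := interior {A : Matrix (Fin m) (Fin n) ℝ | E A < ⊤} with hSdef
  set U := connectedComponentIn S A₀ with hUdef
  have hUS : U ⊆ S := connectedComponentIn_subset _ _
  have hconn : IsPreconnected U :=
    (isConnected_connectedComponentIn_iff.2 hA₀).isPreconnected
  have hA₀U : A₀ ∈ U := mem_connectedComponentIn hA₀
  have hopen1 : IsOpen {A : Matrix (Fin m) (Fin n) ℝ | A ∈ S ∧ E A = ⊥} := by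
    refine Metric.isOpen_iff.2 ?_
    rintro B ⟨hBS, hBbot⟩
    obtain ⟨ε, hε, h⟩ := local_iff hrc hBS
    exact ⟨ε, hε, fun C hC =>
      ⟨(h C (Metric.mem_ball.1 hC)).1, (h C (Metric.mem_ball.1 hC)).2.2 hBbot⟩⟩
  have hopen2 : IsOpen {A : Matrix (Fin m) (Fin n) ℝ | A ∈ S ∧ E A ≠ ⊥} := by
    refine Metric.isOpen_iff.2 ?_
    rintro B ⟨hBS, hBbot⟩
    obtain ⟨ε, hε, h⟩ := local_iff hrc hBS
    exact ⟨ε, hε, fun C hC =>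
      ⟨(h C (Metric.mem_ball.1 hC)).1,
        fun hc => hBbot ((h C (Metric.mem_ball.1 hC)).2.1 hc)⟩⟩
  have main1 : ∀ B ∈ U, E B ≠ ⊥ := by
    by_contra hcon
    push_neg at hcon
    obtain ⟨B, hBU, hBbot⟩ := hcon
    obtain ⟨x, hxU, ⟨-, hx2⟩, ⟨-, hx1⟩⟩ := hconn _ _ hopen2 hopen1
      (fun x hx => by
        by_cases h : E x = ⊥
        · exact Or.inr ⟨hUS hx, h⟩
        · exact Or.inl ⟨hUS hx, h⟩)
      ⟨A₀, hA₀U, hUS hA₀U, hfin.2⟩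
      ⟨B, hBU, hUS hBU, hBbot⟩
    exact hx2 hx1
  refine ⟨main1, fun B hBU X hX t => ?_⟩
  by_cases ht : t = 0
  · subst ht; simpa using main1 B hBU
  intro hbot
  obtain ⟨ε, hε, hball⟩ := Metric.isOpen_iff.1 isOpen_interior B (hUS hBU)
  set K : ℝ := |t| * ‖X‖ + 1 with hK
  have hKpos : 0 < K := by positivity
  set δ : ℝ := ε / (2 * K) with hδdef
  have hδ : 0 < δ := by positivity
  have hl0 : 0 < 1 / (1 + δ) := by positivity
  have hl1 : 1 / (1 + δ) < 1 := by
    rw [div_lt_one (by linarith)]; linarith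
  have hmem : B + (-(δ * t)) • X ∈ interior {A : Matrix (Fin m) (Fin n) ℝ | E A < ⊤} := by
    apply hball
    rw [Metric.mem_ball, dist_eq_norm]
    have h1 : B + (-(δ * t)) • X - B = (-(δ * t)) • X := by abel
    rw [h1, norm_smul, Real.norm_eq_abs, abs_neg, abs_mul, abs_of_pos hδ]
    have h2 : δ * K = ε / 2 := by
      rw [hδdef]; field_simp
    have h3 : δ * |t| * ‖X‖ < δ * K := by
      rw [hK]; nlinarith [abs_nonneg t, norm_nonneg X]
    linarith
  have hb : E ((B + t • X) + (-((1 + δ) * t)) • X) ≠ ⊤ := by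
    have heq : (B + t • X) + (-((1 + δ) * t)) • X = B + (-(δ * t)) • X := by
      rw [add_assoc, ← add_smul]
      congr 1
      ring_nf
    rw [heq]
    exact (interior_subset hmem).ne
  have := bot_segment hrc hX hbot hb hl0 hl1
  have hlb : (1 / (1 + δ)) * (-((1 + δ) * t)) = -t := by
    field_simp
  rw [hlb] at this
  have heq2 : (B + t • X) + (-t) • X = B := by
    rw [add_assoc, ← add_smul, add_neg_cancel, zero_smul, add_zero]
  rw [heq2] at this
  exact main1 B hBU this
end
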